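/- Let A be a pushdown automaton in normal form and π an accepting run for w containing an N-level (i,j,k), with two stack sizes g < h in [s_i, s_j] having equal full states. Factor w = uvxyz at positions lp(g), lp(h), fp(h), fp(g) of π. Then for every n ≥ 0, the word u v^n x y^n z is accepted by A. -/

import Mathlib

/-- A pushdown automaton with state type `Q`, input alphabet `A`, stack alphabet `Γ`.
A transition pops the topmost stack symbol and pushes a string of stack symbols
(head = new top). -/
structure PDA (Q A Γ : Type) where
  init : Q
  startSym : Γ
  final : Set Q
  trans : Q → Option A → Γ → Set (Q × List Γ)

namespace PDA

variable {Q A Γ : Type}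

/-- One step of the automaton: pop the top symbol `Z` and push the string `β`. -/
def Step (M : PDA Q A Γ) (c : Q × List Γ) (a : Option A) (c' : Q × List Γ) : Prop :=
  ∃ Z rest β, c.2 = Z :: rest ∧ (c'.1, β) ∈ M.trans c.1 a Z ∧ c'.2 = β ++ rest

/-- A run of length `m`: a sequence of configurations connected by steps. -/
structure Run (M : PDA Q A Γ) (m : ℕ) where
  conf : ℕ → Q × List Γ
  label : ℕ → Option A
  ok : ∀ t < m, M.Step (conf t) (label t) (conf (t + 1))

/-- Stack size at time `t`. -/
def Run.s {M : PDA Q A Γ} {m : ℕ} (r : M.Run m) (t : ℕ) : ℕ := (r.conf t).2.length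

/-- The input word read between steps `a` (inclusive) and `b` (exclusive). -/
def Run.read {M : PDA Q A Γ} {m : ℕ} (r : M.Run m) (a b : ℕ) : List A :=
  ((List.range' a (b - a)).map r.label).reduceOption

/-- The run is an accepting run for the word `w`. -/
def Run.Accepting {M : PDA Q A Γ} {m : ℕ} (r : M.Run m) (w : List A) : Prop :=
  r.conf 0 = (M.init, [M.startSym]) ∧ (r.conf m).1 ∈ M.final ∧ r.read 0 m = w

/-- The automaton accepts `w` iff some run accepts it. -/
def Accepts (M : PDA Q A Γ) (w : List A) : Prop := ∃ m, ∃ r : M.Run m, r.Accepting w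

/-- Normal form: every transition pops the top symbol and pushes either nothing or
the popped symbol together with exactly one additional symbol. -/
def NormalForm (M : PDA Q A Γ) : Prop :=
  ∀ q a Z q' β, (q', β) ∈ M.trans q a Z → β = [] ∨ ∃ Y, β = [Y, Z]

/-- `(i, j, k)` is an `N`-level of the run `r`. -/
def Run.IsLevel {M : PDA Q A Γ} {m : ℕ} (r : M.Run m) (N i j k : ℕ) : Prop :=
  i < j ∧ j < k ∧ k ≤ m ∧ r.s i = r.s k ∧ r.s j = r.s i + N ∧
    (∀ n, i ≤ n → n ≤ j → r.s i ≤ r.s n ∧ r.s n ≤ r.s j) ∧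
    (∀ n, j ≤ n → n ≤ k → r.s k ≤ r.s n ∧ r.s n ≤ r.s j)

/-- The run has an `N`-level. -/
def Run.HasLevel {M : PDA Q A Γ} {m : ℕ} (r : M.Run m) (N : ℕ) : Prop :=
  ∃ i j k, r.IsLevel N i j k

/-- The level of the run is `l`: the maximal `N` such that the run has an `N`-level. -/
def Run.LevelIs {M : PDA Q A Γ} {m : ℕ} (r : M.Run m) (l : ℕ) : Prop :=
  r.HasLevel l ∧ ∀ N, r.HasLevel N → N ≤ l

/-- `lp(h)`: the last time `≤ j` at which the stack has size `h`. -/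
noncomputable def Run.lp {M : PDA Q A Γ} {m : ℕ} (r : M.Run m) (j h : ℕ) : ℕ :=
  sSup {y | y ≤ j ∧ r.s y = h}

/-- `fp(h)`: the first time `≥ j` at which the stack has size `h`. -/
noncomputable def Run.fp {M : PDA Q A Γ} {m : ℕ} (r : M.Run m) (j h : ℕ) : ℕ :=
  sInf {y | j ≤ y ∧ r.s y = h}

/-- The full state of a stack size `h` (relative to the middle index `j` of a level):
the state at `lp(h)`, the top stack symbol at `lp(h)`, and the state at `fp(h)`. -/
noncomputable def Run.fullState {M : PDA Q A Γ} {m : ℕ} (r : M.Run m) (j h : ℕ) : Q × Option Γ × Q :=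
  ((r.conf (r.lp j h)).1, (r.conf (r.lp j h)).2.head?, (r.conf (r.fp j h)).1)

/-- Extended configuration: the state together with the top `l` stack symbols,
padded with blanks (`none`) if the stack has fewer than `l` symbols. -/
def Run.extConf {M : PDA Q A Γ} {m : ℕ} (r : M.Run m) (l t : ℕ) : Q × List (Option Γ) :=
  ((r.conf t).1, ((r.conf t).2.map some ++ List.replicate l none).take l)

end PDA

/-- `n`-fold concatenation of a word. -/
def wpow {A : Type} (v : List A) (n : ℕ) : List A := (List.replicate n v).flatten

namespace PDA

variable {Q A Γ : Type} {M : PDA Q A Γ}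

section Aux

/-- Under normal form, the stack size changes by exactly one at each step. -/
lemma step_s (hnf : M.NormalForm) {m : ℕ} (r : M.Run m) {t : ℕ} (ht : t < m) :
    r.s (t + 1) = r.s t + 1 ∨ r.s (t + 1) + 1 = r.s t := by
  obtain ⟨Z, rest, β, h1, h2, h3⟩ := r.ok t ht
  rcases hnf _ _ _ _ _ h2 with hb | ⟨Y, hY⟩
  · right; subst hb; simp [Run.s, h1, h3]
  · left; subst hY; simp [Run.s, h1, h3]

lemma ivt_up (hnf : M.NormalForm) {m : ℕ} (r : M.Run m) (v : ℕ) :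
    ∀ n a, a + n ≤ m → r.s a ≤ v → v ≤ r.s (a + n) →
      ∃ t, a ≤ t ∧ t ≤ a + n ∧ r.s t = v := by
  intro n
  induction n with
  | zero => exact fun a _ h1 h2 => ⟨a, le_refl _, le_refl _, le_antisymm h1 h2⟩
  | succ n ih =>
    intro a hm h1 h2
    by_cases hc : v ≤ r.s (a + n)
    · obtain ⟨t, ht1, ht2, ht3⟩ := ih a (by omega) h1 hc
      exact ⟨t, ht1, by omega, ht3⟩
    · push_neg at hc
      have hst := step_s hnf r (t := a + n) (by omega)
      have h2' : v ≤ r.s (a + n + 1) := h2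
      refine ⟨a + n + 1, by omega, by omega, by omega⟩

lemma ivt_down (hnf : M.NormalForm) {m : ℕ} (r : M.Run m) (v : ℕ) :
    ∀ n a, a + n ≤ m → v ≤ r.s a → r.s (a + n) ≤ v →
      ∃ t, a ≤ t ∧ t ≤ a + n ∧ r.s t = v := by
  intro n
  induction n with
  | zero => exact fun a _ h1 h2 => ⟨a, le_refl _, le_refl _, le_antisymm h2 h1⟩
  | succ n ih =>
    intro a hm h1 h2
    by_cases hc : r.s (a + n) ≤ v
    · obtain ⟨t, ht1, ht2, ht3⟩ := ih a (by omega) h1 hc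
      exact ⟨t, ht1, by omega, ht3⟩
    · push_neg at hc
      have hst := step_s hnf r (t := a + n) (by omega)
      have h2' : r.s (a + n + 1) ≤ v := h2
      refine ⟨a + n + 1, by omega, by omega, by omega⟩

lemma ivt (hnf : M.NormalForm) {m : ℕ} (r : M.Run m) {a b v : ℕ}
    (hab : a ≤ b) (hbm : b ≤ m)
    (h : (r.s a ≤ v ∧ v ≤ r.s b) ∨ (v ≤ r.s a ∧ r.s b ≤ v)) :
    ∃ t, a ≤ t ∧ t ≤ b ∧ r.s t = v := by
  have hb : b = a + (b - a) := by omega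
  rcases h with ⟨h1, h2⟩ | ⟨h1, h2⟩
  · obtain ⟨t, ht1, ht2, ht3⟩ := ivt_up hnf r v (b - a) a (by omega) h1 (hb ▸ h2)
    exact ⟨t, ht1, by omega, ht3⟩
  · obtain ⟨t, ht1, ht2, ht3⟩ := ivt_down hnf r v (b - a) a (by omega) h1 (hb ▸ h2)
    exact ⟨t, ht1, by omega, ht3⟩

/-- If the stack size stays at least `c`, the bottom `c` symbols never change. -/
lemma bottom_const (hnf : M.NormalForm) {m : ℕ} (r : M.Run m) (c : ℕ)
    (hs : ∀ t ≤ m, c ≤ r.s t) :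
    ∀ t ≤ m, (r.conf t).2.drop (r.s t - c) = (r.conf 0).2.drop (r.s 0 - c) := by
  intro t
  induction t with
  | zero => intro _; rfl
  | succ t ih =>
    intro htm
    rw [← ih (by omega)]
    obtain ⟨Z, rest, β, h1, h2, h3⟩ := r.ok t (by omega)
    have hst : r.s t = rest.length + 1 := by simp [Run.s, h1]
    have hst' : r.s (t + 1) = β.length + rest.length := by simp [Run.s, h3]
    rcases hnf _ _ _ _ _ h2 with hb | ⟨Y, hY⟩
    · subst hb
      simp only [List.length_nil, Nat.zero_add] at hst'
      have hc : c ≤ rest.length := by have := hs (t + 1) htm; omega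
      rw [h1, h3, show r.s t - c = (rest.length - c) + 1 by omega, List.drop_succ_cons]
      simp [hst']
    · subst hY
      simp only [List.length_cons, List.length_nil] at hst'
      have hc : c ≤ r.s t := hs t (by omega)
      rw [h1, h3, show r.s (t + 1) - c = (r.s t - c) + 1 by omega]
      have : ([Y, Z] ++ rest : List Γ) = Y :: (Z :: rest) := rfl
      rw [this, List.drop_succ_cons]

def Run.segment {m : ℕ} (r : M.Run m) (a b : ℕ) (hab : a ≤ b) (hbm : b ≤ m) :
    M.Run (b - a) where
  conf t := r.conf (a + t)
  label t := r.label (a + t)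
  ok t ht := r.ok (a + t) (by omega)

lemma segment_conf {m : ℕ} (r : M.Run m) (a b : ℕ) (hab : a ≤ b) (hbm : b ≤ m) (t : ℕ) :
    (r.segment a b hab hbm).conf t = r.conf (a + t) := rfl

lemma segment_s {m : ℕ} (r : M.Run m) (a b : ℕ) (hab : a ≤ b) (hbm : b ≤ m) (t : ℕ) :
    (r.segment a b hab hbm).s t = r.s (a + t) := rfl

lemma segment_read {m : ℕ} (r : M.Run m) (a b : ℕ) (hab : a ≤ b) (hbm : b ≤ m) :
    (r.segment a b hab hbm).read 0 (b - a) = r.read a b := by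
  simp [Run.read, Run.segment, List.range'_eq_map_range, List.map_map, Function.comp_def]

def Run.append {m1 m2 : ℕ} (r1 : M.Run m1) (r2 : M.Run m2)
    (hc : r1.conf m1 = r2.conf 0) : M.Run (m1 + m2) where
  conf t := if t ≤ m1 then r1.conf t else r2.conf (t - m1)
  label t := if t < m1 then r1.label t else r2.label (t - m1)
  ok t ht := by
    by_cases h : t < m1
    · simp only [if_pos (by omega : t ≤ m1), if_pos (by omega : t + 1 ≤ m1), if_pos h]
      exact r1.ok t h
    · have h2 : m1 ≤ t := by omega
      have hconf : (if t ≤ m1 then r1.conf t else r2.conf (t - m1)) = r2.conf (t - m1) := by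
        by_cases he : t ≤ m1
        · have : t = m1 := by omega
          subst this; simp [hc]
        · simp [he]
      simp only [if_neg (by omega : ¬ t + 1 ≤ m1), if_neg h, hconf,
        show t + 1 - m1 = (t - m1) + 1 by omega]
      exact r2.ok (t - m1) (by omega)

lemma append_conf_zero {m1 m2 : ℕ} (r1 : M.Run m1) (r2 : M.Run m2)
    (hc : r1.conf m1 = r2.conf 0) : (r1.append r2 hc).conf 0 = r1.conf 0 := by
  simp [Run.append]

lemma append_conf_last {m1 m2 : ℕ} (r1 : M.Run m1) (r2 : M.Run m2)
    (hc : r1.conf m1 = r2.conf 0) : (r1.append r2 hc).conf (m1 + m2) = r2.conf m2 := by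
  by_cases h : m2 = 0
  · subst h; simp [Run.append, hc]
  · simp only [Run.append, if_neg (by omega : ¬ m1 + m2 ≤ m1)]
    congr 1
    omega

lemma append_read {m1 m2 : ℕ} (r1 : M.Run m1) (r2 : M.Run m2)
    (hc : r1.conf m1 = r2.conf 0) :
    (r1.append r2 hc).read 0 (m1 + m2) = r1.read 0 m1 ++ r2.read 0 m2 := by
  have hsplit : List.range' 0 (m1 + m2) = List.range' 0 m1 ++ List.range' m1 m2 := by
    rw [← List.range'_append (s := 0) (m := m1) (n := m2) (step := 1)]
    simp
  simp only [Run.read, Nat.sub_zero, hsplit, List.map_append, List.reduceOption_append]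
  congr 1
  · congr 1
    apply List.map_congr_left
    intro x hx
    have : x < m1 := by
      have := List.mem_range'_1.mp hx; omega
    simp [Run.append, this]
  · congr 1
    have : List.range' m1 m2 = (List.range' 0 m2).map (fun x => m1 + x) := by
      simp [List.range'_eq_map_range, List.map_map, Function.comp]
    rw [this, List.map_map]
    apply List.map_congr_left
    intro x hx
    simp only [Function.comp, Run.append, if_neg (by omega : ¬ m1 + x < m1)]
    congr 1
    omega

/-- Replay a run with the bottom part of the stack (below level `c`) replaced by `γ'`. -/
def Run.replay {m : ℕ} (hnf : M.NormalForm) (r : M.Run m) (c : ℕ)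
    (hs : ∀ t ≤ m, c ≤ r.s t) (γ' : List Γ)
    (hh : γ'.head? = ((r.conf 0).2.drop (r.s 0 - c)).head?) : M.Run m where
  conf t := ((r.conf t).1, (r.conf t).2.take (r.s t - c) ++ γ')
  label := r.label
  ok t ht := by
    obtain ⟨Z, rest, β, h1, h2, h3⟩ := r.ok t ht
    have hst : r.s t = rest.length + 1 := by simp [Run.s, h1]
    have hst' : r.s (t + 1) = β.length + rest.length := by simp [Run.s, h3]
    have hct : c ≤ r.s t := hs t (by omega)
    by_cases hcr : c ≤ rest.length
    · refine ⟨Z, rest.take (r.s t - 1 - c) ++ γ', β, ?_, h2, ?_⟩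
      · show (r.conf t).2.take (r.s t - c) ++ γ' = _
        rw [h1, show r.s t - c = (r.s t - 1 - c) + 1 by omega, List.take_succ_cons]
        simp
      · show (r.conf (t + 1)).2.take (r.s (t + 1) - c) ++ γ' = _
        rw [h3, show r.s (t + 1) - c = β.length + (rest.length - c) by omega,
          List.take_append, show r.s t - 1 - c = rest.length - c by omega]
        simp
    · -- here the run is exactly at level c : r.s t = c
      have hceq : c = rest.length + 1 := by omega
      have hbot := bottom_const hnf r c hs t (by omega)
      rw [show r.s t - c = 0 by omega, List.drop_zero] at hbot
      have hγZ : γ'.head? = some Z := by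
        rw [hh, ← hbot, h1]; rfl
      have hγ : γ' = Z :: γ'.tail := by
        cases γ' with
        | nil => simp at hγZ
        | cons a l => simp only [List.head?_cons, Option.some.injEq] at hγZ; simp [hγZ]
      rcases hnf _ _ _ _ _ h2 with hb | ⟨Y, hY⟩
      · exfalso
        have := hs (t + 1) (by omega)
        subst hb
        simp at hst'
        omega
      · subst hY
        refine ⟨Z, γ'.tail, [Y, Z], ?_, h2, ?_⟩
        · show (r.conf t).2.take (r.s t - c) ++ γ' = Z :: γ'.tail
          rw [show r.s t - c = 0 by omega, List.take_zero, List.nil_append]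
          exact hγ
        · show (r.conf (t + 1)).2.take (r.s (t + 1) - c) ++ γ' = [Y, Z] ++ γ'.tail
          simp only [List.length_cons, List.length_nil] at hst'
          rw [h3, show r.s (t + 1) - c = 1 by omega]
          conv_lhs => rw [hγ]
          rfl

lemma replay_conf {m : ℕ} (hnf : M.NormalForm) (r : M.Run m) (c : ℕ)
    (hs : ∀ t ≤ m, c ≤ r.s t) (γ' : List Γ)
    (hh : γ'.head? = ((r.conf 0).2.drop (r.s 0 - c)).head?) (t : ℕ) :
    (r.replay hnf c hs γ' hh).conf t
      = ((r.conf t).1, (r.conf t).2.take (r.s t - c) ++ γ') := rfl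

lemma replay_read {m : ℕ} (hnf : M.NormalForm) (r : M.Run m) (c : ℕ)
    (hs : ∀ t ≤ m, c ≤ r.s t) (γ' : List Γ)
    (hh : γ'.head? = ((r.conf 0).2.drop (r.s 0 - c)).head?) (a b : ℕ) :
    (r.replay hnf c hs γ' hh).read a b = r.read a b := rfl

end Aux

lemma copies_up (hnf : M.NormalForm) {L : ℕ} (seg : M.Run L) (g : ℕ)
    (hs : ∀ t ≤ L, g ≤ seg.s t) (q : Q) (α δ : List Γ)
    (h0 : seg.conf 0 = (q, α)) (hL : seg.conf L = (q, δ ++ α))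
    (hα : α.length = g)
    (hhead : ∀ p : ℕ, ((List.replicate p δ).flatten ++ α).head? = α.head?) :
    ∀ n : ℕ, ∃ (len : ℕ) (cr : M.Run len),
      cr.conf 0 = (q, α) ∧
      cr.conf len = (q, (List.replicate n δ).flatten ++ α) ∧
      cr.read 0 len = wpow (seg.read 0 L) n := by
  intro n
  induction n with
  | zero =>
    refine ⟨0, ⟨fun _ => (q, α), fun _ => none, fun t ht => (Nat.not_lt_zero t ht).elim⟩,
      rfl, by simp, by simp [Run.read, wpow]⟩
  | succ n ih =>
    obtain ⟨len, cr, hc0, hcl, hcr⟩ := ih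
    have hs0 : seg.s 0 = g := by simp [Run.s, h0, hα]
    have hh : ((List.replicate n δ).flatten ++ α).head?
        = ((seg.conf 0).2.drop (seg.s 0 - g)).head? := by
      rw [h0, hs0]
      simpa using hhead n
    have hcompat : cr.conf len
        = (seg.replay hnf g hs ((List.replicate n δ).flatten ++ α) hh).conf 0 := by
      rw [replay_conf, h0, hs0]
      simpa using hcl
    refine ⟨len + L, cr.append _ hcompat, ?_, ?_, ?_⟩
    · rw [append_conf_zero]; exact hc0
    · rw [append_conf_last, replay_conf, hL]
      have hsl : seg.s L = δ.length + g := by simp [Run.s, hL, hα]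
      rw [hsl, show δ.length + g - g = δ.length by omega, List.take_left]
      simp [List.replicate_succ]
    · rw [append_read, hcr, replay_read]
      simp [wpow, List.replicate_succ', List.flatten_append]

lemma copies_down (hnf : M.NormalForm) {L : ℕ} (seg : M.Run L) (g : ℕ)
    (hs : ∀ t ≤ L, g ≤ seg.s t) (p : Q) (α δ : List Γ)
    (h0 : seg.conf 0 = (p, δ ++ α)) (hL : seg.conf L = (p, α))
    (hα : α.length = g)
    (hhead : ∀ pp : ℕ, ((List.replicate pp δ).flatten ++ α).head? = α.head?) :
    ∀ n : ℕ, ∃ (len : ℕ) (cr : M.Run len),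
      cr.conf 0 = (p, (List.replicate n δ).flatten ++ α) ∧
      cr.conf len = (p, α) ∧
      cr.read 0 len = wpow (seg.read 0 L) n := by
  intro n
  induction n with
  | zero =>
    refine ⟨0, ⟨fun _ => (p, α), fun _ => none, fun t ht => (Nat.not_lt_zero t ht).elim⟩,
      by simp, rfl, by simp [Run.read, wpow]⟩
  | succ n ih =>
    obtain ⟨len, cr, hc0, hcl, hcr⟩ := ih
    have hs0 : seg.s 0 = δ.length + g := by simp [Run.s, h0, hα]
    have hh : ((List.replicate n δ).flatten ++ α).head?
        = ((seg.conf 0).2.drop (seg.s 0 - g)).head? := by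
      rw [h0, hs0, show δ.length + g - g = δ.length by omega]
      show _ = (List.drop δ.length (δ ++ α)).head?
      rw [List.drop_left]
      exact hhead n
    have hsl : seg.s L = g := by simp [Run.s, hL, hα]
    have hcompat : (seg.replay hnf g hs ((List.replicate n δ).flatten ++ α) hh).conf L
        = cr.conf 0 := by
      rw [replay_conf, hL, hsl, Nat.sub_self]
      simpa using hc0.symm
    refine ⟨L + len, Run.append _ cr hcompat, ?_, ?_, ?_⟩
    · rw [append_conf_zero, replay_conf, h0, hs0,
        show δ.length + g - g = δ.length by omega]
      show (p, List.take δ.length (δ ++ α) ++ _) = _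
      rw [List.take_left]
      simp [List.replicate_succ]
    · rw [append_conf_last]; exact hcl
    · rw [append_read, hcr, replay_read]
      simp [wpow, List.replicate_succ]


end PDA

/-- Case 2 pumping: if an accepting run has an `N`-level `(i, j, k)` with two stack
sizes `g < h` having equal full states, then factoring the word at positions
`lp(g), lp(h), fp(h), fp(g)` allows matched pumping. -/

theorem case2_pumping {Q A Γ : Type} {M : PDA Q A Γ} {m : ℕ}
    (hnf : M.NormalForm) (r : M.Run m) (w : List A) (hacc : r.Accepting w)
    {N i j k : ℕ} (hlev : r.IsLevel N i j k)
    {g h : ℕ} (hgl : r.s i ≤ g) (hgh : g < h) (hhu : h ≤ r.s j)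
    (hfs : r.fullState j g = r.fullState j h)
    (u v x y z : List A)
    (hu : u = r.read 0 (r.lp j g)) (hv : v = r.read (r.lp j g) (r.lp j h))
    (hx : x = r.read (r.lp j h) (r.fp j h)) (hy : y = r.read (r.fp j h) (r.fp j g))
    (hz : z = r.read (r.fp j g) m) :
    ∀ n : ℕ, M.Accepts (u ++ wpow v n ++ x ++ wpow y n ++ z) := by
  intro n
  obtain ⟨hij, hjk, hkm, hik, hsj, hb1, hb2⟩ := hlev
  simp only [PDA.Run.fullState, Prod.mk.injEq] at hfs
  obtain ⟨hq, hhd, hp⟩ := hfs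
  set a := r.lp j g with hadef
  set b := r.lp j h with hbdef
  set c := r.fp j h with hcdef
  set d := r.fp j g with hddef
  have hjm : j ≤ m := by omega
  have hgsj : g ≤ r.s j := by omega
  have hhsj : h ≤ r.s j := hhu
  have hskg : r.s k ≤ g := by omega
  -- a = lp g
  have hSg_bdd : BddAbove {y | y ≤ j ∧ r.s y = g} := ⟨j, fun x hx => hx.1⟩
  obtain ⟨y0, hy01, hy02, hy03⟩ :=
    PDA.ivt hnf r (a := i) (b := j) (v := g) (le_of_lt hij) hjm (Or.inl ⟨hgl, hgsj⟩)
  have haS : a ∈ {y | y ≤ j ∧ r.s y = g} := by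
    rw [hadef, PDA.Run.lp]; exact Nat.sSup_mem ⟨y0, hy02, hy03⟩ hSg_bdd
  have haj : a ≤ j := haS.1
  have hsa : r.s a = g := haS.2
  have ha_max : ∀ t, t ≤ j → r.s t = g → t ≤ a := fun t h1 h2 => le_csSup hSg_bdd ⟨h1, h2⟩
  -- b = lp h
  have hSh_bdd : BddAbove {y | y ≤ j ∧ r.s y = h} := ⟨j, fun x hx => hx.1⟩
  obtain ⟨y1, hy11, hy12, hy13⟩ :=
    PDA.ivt hnf r (a := i) (b := j) (v := h) (le_of_lt hij) hjm (Or.inl ⟨by omega, hhsj⟩)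
  have hbS : b ∈ {y | y ≤ j ∧ r.s y = h} := by
    rw [hbdef, PDA.Run.lp]; exact Nat.sSup_mem ⟨y1, hy12, hy13⟩ hSh_bdd
  have hbj : b ≤ j := hbS.1
  have hsb : r.s b = h := hbS.2
  have hb_max : ∀ t, t ≤ j → r.s t = h → t ≤ b := fun t h1 h2 => le_csSup hSh_bdd ⟨h1, h2⟩
  -- c = fp h
  obtain ⟨y2, hy21, hy22, hy23⟩ :=
    PDA.ivt hnf r (a := j) (b := k) (v := h) (le_of_lt hjk) hkm (Or.inr ⟨hhsj, by omega⟩)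
  have hcS : c ∈ {y | j ≤ y ∧ r.s y = h} := by
    rw [hcdef, PDA.Run.fp]; exact Nat.sInf_mem ⟨y2, hy21, hy23⟩
  have hjc : j ≤ c := hcS.1
  have hsc : r.s c = h := hcS.2
  have hc_min : ∀ t, j ≤ t → r.s t = h → c ≤ t := fun t h1 h2 => Nat.sInf_le ⟨h1, h2⟩
  have hcm : c ≤ m := le_trans (hc_min y2 hy21 hy23) (le_trans hy22 hkm)
  -- d = fp g
  obtain ⟨y3, hy31, hy32, hy33⟩ :=
    PDA.ivt hnf r (a := j) (b := k) (v := g) (le_of_lt hjk) hkm (Or.inr ⟨hgsj, hskg⟩)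
  have hdS : d ∈ {y | j ≤ y ∧ r.s y = g} := by
    rw [hddef, PDA.Run.fp]; exact Nat.sInf_mem ⟨y3, hy31, hy33⟩
  have hjd : j ≤ d := hdS.1
  have hsd : r.s d = g := hdS.2
  have hd_min : ∀ t, j ≤ t → r.s t = g → d ≤ t := fun t h1 h2 => Nat.sInf_le ⟨h1, h2⟩
  have hdm : d ≤ m := le_trans (hd_min y3 hy31 hy33) (le_trans hy32 hkm)
  -- ordering
  have hab : a ≤ b := by
    obtain ⟨t, ht1, ht2, ht3⟩ :=
      PDA.ivt hnf r (a := a) (b := j) (v := h) haj hjm (Or.inl ⟨by omega, hhsj⟩)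
    exact le_trans ht1 (hb_max t ht2 ht3)
  have hcd : c ≤ d := by
    obtain ⟨t, ht1, ht2, ht3⟩ :=
      PDA.ivt hnf r (a := j) (b := d) (v := h) hjd hdm (Or.inr ⟨hhsj, by omega⟩)
    exact le_trans (hc_min t ht1 ht3) ht2
  have hbc : b ≤ c := le_trans hbj hjc
  have hbm : b ≤ m := le_trans hbj hjm
  -- stack size bounds
  have hAB : ∀ t, a ≤ t → t ≤ b → g ≤ r.s t := by
    intro t h1 h2
    rcases eq_or_lt_of_le h1 with he | hlt
    · rw [← he, hsa]
    by_contra hcon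
    push_neg at hcon
    obtain ⟨yy, hyy1, hyy2, hyy3⟩ :=
      PDA.ivt hnf r (a := t) (b := j) (v := g) (by omega) hjm (Or.inl ⟨by omega, hgsj⟩)
    have := ha_max yy hyy2 hyy3
    omega
  have hBCl : ∀ t, b ≤ t → t ≤ j → h ≤ r.s t := by
    intro t h1 h2
    rcases eq_or_lt_of_le h1 with he | hlt
    · rw [← he, hsb]
    by_contra hcon
    push_neg at hcon
    obtain ⟨yy, hyy1, hyy2, hyy3⟩ :=
      PDA.ivt hnf r (a := t) (b := j) (v := h) h2 hjm (Or.inl ⟨by omega, hhsj⟩)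
    have := hb_max yy hyy2 hyy3
    omega
  have hJC : ∀ t, j ≤ t → t ≤ c → h ≤ r.s t := by
    intro t h1 h2
    rcases eq_or_lt_of_le h2 with he | hlt
    · rw [he, hsc]
    by_contra hcon
    push_neg at hcon
    obtain ⟨yy, hyy1, hyy2, hyy3⟩ :=
      PDA.ivt hnf r (a := j) (b := t) (v := h) h1 (by omega) (Or.inr ⟨hhsj, by omega⟩)
    have := hc_min yy hyy1 hyy3
    omega
  have hJD : ∀ t, j ≤ t → t ≤ d → g ≤ r.s t := by
    intro t h1 h2
    rcases eq_or_lt_of_le h2 with he | hlt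
    · rw [he, hsd]
    by_contra hcon
    push_neg at hcon
    obtain ⟨yy, hyy1, hyy2, hyy3⟩ :=
      PDA.ivt hnf r (a := j) (b := t) (v := g) h1 (by omega) (Or.inr ⟨hgsj, by omega⟩)
    have := hd_min yy hyy1 hyy3
    omega
  have hBC : ∀ t, b ≤ t → t ≤ c → h ≤ r.s t := by
    intro t h1 h2
    by_cases ht : t ≤ j
    · exact hBCl t h1 ht
    · exact hJC t (by omega) h2
  have hCD : ∀ t, c ≤ t → t ≤ d → g ≤ r.s t :=
    fun t h1 h2 => hJD t (le_trans hjc h1) h2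
  -- segments
  set segAB := r.segment a b hab hbm with hsegABdef
  set segBC := r.segment b c hbc hcm with hsegBCdef
  set segCD := r.segment c d hcd hdm with hsegCDdef
  have hsAB : ∀ t ≤ b - a, g ≤ segAB.s t := by
    intro t ht
    rw [hsegABdef, PDA.segment_s]
    exact hAB (a + t) (by omega) (by omega)
  have hsBC : ∀ t ≤ c - b, h ≤ segBC.s t := by
    intro t ht
    rw [hsegBCdef, PDA.segment_s]
    exact hBC (b + t) (by omega) (by omega)
  have hsCD : ∀ t ≤ d - c, g ≤ segCD.s t := by
    intro t ht
    rw [hsegCDdef, PDA.segment_s]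
    exact hCD (c + t) (by omega) (by omega)
  -- stack contents
  set α := (r.conf a).2 with hαdef
  have hαlen : α.length = g := hsa
  have hconfABb : segAB.conf (b - a) = r.conf b := by
    rw [hsegABdef, PDA.segment_conf, show a + (b - a) = b by omega]
  have hsegABb : segAB.s (b - a) = h := by
    rw [hsegABdef, PDA.segment_s, show a + (b - a) = b by omega]; exact hsb
  have hsegAB0 : segAB.s 0 = g := by
    rw [hsegABdef, PDA.segment_s, Nat.add_zero]; exact hsa
  have hABconst := PDA.bottom_const hnf segAB g hsAB (b - a) (le_refl _)
  rw [hconfABb, hsegABb, hsegAB0, show segAB.conf 0 = r.conf a from rfl, ← hαdef,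
    Nat.sub_self, List.drop_zero] at hABconst
  set δ := (r.conf b).2.take (h - g) with hδdef
  have hδα : (r.conf b).2 = δ ++ α := by
    conv_lhs => rw [← List.take_append_drop (h - g) (r.conf b).2]
    rw [hABconst]
  have hlenb : (r.conf b).2.length = h := hsb
  have hδlen : δ.length = h - g := by
    rw [hδdef, List.length_take, hlenb]; omega
  -- stack at c equals stack at b
  have hconfBCc : segBC.conf (c - b) = r.conf c := by
    rw [hsegBCdef, PDA.segment_conf, show b + (c - b) = c by omega]
  have hsegBCc : segBC.s (c - b) = h := by
    rw [hsegBCdef, PDA.segment_s, show b + (c - b) = c by omega]; exact hsc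
  have hsegBC0 : segBC.s 0 = h := by
    rw [hsegBCdef, PDA.segment_s, Nat.add_zero]; exact hsb
  have hBCconst := PDA.bottom_const hnf segBC h hsBC (c - b) (le_refl _)
  rw [hconfBCc, hsegBCc, hsegBC0, show segBC.conf 0 = r.conf b from rfl,
    Nat.sub_self, List.drop_zero, List.drop_zero] at hBCconst
  have hstackc : (r.conf c).2 = δ ++ α := by rw [hBCconst, hδα]
  -- stack at d
  have hconfCDd : segCD.conf (d - c) = r.conf d := by
    rw [hsegCDdef, PDA.segment_conf, show c + (d - c) = d by omega]
  have hsegCDd : segCD.s (d - c) = g := by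
    rw [hsegCDdef, PDA.segment_s, show c + (d - c) = d by omega]; exact hsd
  have hsegCD0 : segCD.s 0 = h := by
    rw [hsegCDdef, PDA.segment_s, Nat.add_zero]; exact hsc
  have hCDconst := PDA.bottom_const hnf segCD g hsCD (d - c) (le_refl _)
  rw [hconfCDd, hsegCDd, hsegCD0, show segCD.conf 0 = r.conf c from rfl,
    Nat.sub_self, List.drop_zero, hstackc, ← hδlen, List.drop_left] at hCDconst
  -- states
  set q := (r.conf a).1 with hqdef
  set pst := (r.conf c).1 with hpstdef
  have hconfa : r.conf a = (q, α) := rfl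
  have hqb : r.conf b = (q, δ ++ α) := Prod.ext_iff.mpr ⟨hq.symm, hδα⟩
  have hconfc : r.conf c = (pst, δ ++ α) := Prod.ext_iff.mpr ⟨rfl, hstackc⟩
  have hconfd : r.conf d = (pst, α) := Prod.ext_iff.mpr ⟨hp, hCDconst⟩
  -- head facts
  have hδne : δ ≠ [] := by
    intro h0
    rw [h0] at hδlen
    simp at hδlen
    omega
  obtain ⟨Z, δt, hδcons⟩ := List.exists_cons_of_ne_nil hδne
  have hαhd : α.head? = some Z := by
    rw [hαdef, hhd, hδα, hδcons]; rfl
  have hhead : ∀ p : ℕ, ((List.replicate p δ).flatten ++ α).head? = α.head? := by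
    intro p
    cases p with
    | zero => simp
    | succ p => simp [List.replicate_succ, hδcons, hαhd]
  -- push copies
  obtain ⟨len1, Cup, hup0, hupL, hupread⟩ :=
    PDA.copies_up hnf segAB g hsAB q α δ hconfa (by rw [hconfABb]; exact hqb) hαlen hhead n
  -- middle replay
  have hhmid : ((List.replicate n δ).flatten ++ α).head?
      = ((segBC.conf 0).2.drop (segBC.s 0 - h)).head? := by
    rw [show segBC.conf 0 = r.conf b from rfl, hsegBC0, Nat.sub_self, List.drop_zero,
      ← hhd]
    exact hhead n
  set Mid := segBC.replay hnf h hsBC ((List.replicate n δ).flatten ++ α) hhmid with hMiddef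
  have hmid0 : Mid.conf 0 = (q, (List.replicate n δ).flatten ++ α) := by
    rw [hMiddef, PDA.replay_conf, show segBC.conf 0 = r.conf b from rfl, hsegBC0,
      Nat.sub_self, hqb]
    simp
  have hmidL : Mid.conf (c - b) = (pst, (List.replicate n δ).flatten ++ α) := by
    rw [hMiddef, PDA.replay_conf, hconfBCc, hsegBCc, Nat.sub_self, hconfc]
    simp
  -- pop copies
  obtain ⟨len2, Cdown, hdn0, hdnL, hdnread⟩ :=
    PDA.copies_down hnf segCD g hsCD pst α δ hconfc (by rw [hconfCDd]; exact hconfd)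
      hαlen hhead n
  -- end segments
  set P0 := r.segment 0 a (Nat.zero_le a) (le_trans haj hjm) with hP0def
  set P4 := r.segment d m hdm (le_refl m) with hP4def
  -- compatibilities
  have c4 : Cdown.conf len2 = P4.conf 0 := by
    rw [hdnL, hP4def]
    exact hconfd.symm
  set G4 := Cdown.append P4 c4 with hG4def
  have c3 : Mid.conf (c - b) = G4.conf 0 := by
    rw [hG4def, PDA.append_conf_zero, hmidL, hdn0]
  set G3 := Mid.append G4 c3 with hG3def
  have c2 : Cup.conf len1 = G3.conf 0 := by
    rw [hG3def, PDA.append_conf_zero, hupL, hmid0]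
  set G2 := Cup.append G3 c2 with hG2def
  have c1 : P0.conf (a - 0) = G2.conf 0 := by
    rw [hG2def, PDA.append_conf_zero, hup0, hP0def, PDA.segment_conf,
      show 0 + (a - 0) = a by omega, hconfa]
  set G := P0.append G2 c1 with hGdef
  refine ⟨_, G, ?_, ?_, ?_⟩
  · rw [hGdef, PDA.append_conf_zero]
    exact hacc.1
  · rw [hGdef, PDA.append_conf_last, hG2def, PDA.append_conf_last, hG3def,
      PDA.append_conf_last, hG4def, PDA.append_conf_last]
    have : P4.conf (m - d) = r.conf m := by
      rw [hP4def, PDA.segment_conf, show d + (m - d) = m by omega]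
    rw [this]
    exact hacc.2.1
  · rw [hGdef, PDA.append_read, hG2def, PDA.append_read, hG3def, PDA.append_read,
      hG4def, PDA.append_read, hupread, hdnread]
    rw [show Mid.read 0 (c - b) = segBC.read 0 (c - b) from rfl]
    rw [hP0def, hP4def, hsegABdef, hsegBCdef, hsegCDdef,
      PDA.segment_read, PDA.segment_read, PDA.segment_read, PDA.segment_read,
      PDA.segment_read]
    rw [← hu, ← hv, ← hx, ← hy, ← hz]
    simp [List.append_assoc]
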